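/- Convexity bound: for probability measures π, μ₀ and λ ∈ [0,1], D_KL(π | (1-λ)μ₀ + λπ) ≤ (1-λ)·D_KL(π | μ₀). In particular, taking λ = 1 - e^{-t} recovers the exponential decay D_KL(π | μ_t) ≤ e^{-t}·D_KL(π | μ₀) along the Fisher-Rao flow μ_t = e^{-t}μ₀ + (1-e^{-t})π. -/

import Mathlib

open MeasureTheory
open scoped Classical

/-- The Kullback–Leibler divergence `D_KL(π|μ) = ∫ log(dπ/dμ) dπ` if `π ≪ μ` (and the
integral is defined), `+∞` otherwise; valued in `ℝ≥0∞`. -/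

noncomputable def klDiv {X : Type*} [MeasurableSpace X] (π μ : Measure X) : ENNReal :=
  if π ≪ μ ∧ Integrable (fun x => Real.log ((π.rnDeriv μ x).toReal)) π then
    ENNReal.ofReal (∫ x, Real.log ((π.rnDeriv μ x).toReal) ∂π)
  else ⊤

lemma klDiv_self_aux {X : Type*} [MeasurableSpace X] (π : Measure X) [IsFiniteMeasure π] :
    klDiv π π = 0 := by
  have h1 : (fun x => Real.log ((π.rnDeriv π x).toReal)) =ᵐ[π] fun _ => (0 : ℝ) := by
    filter_upwards [Measure.rnDeriv_self π] with x hx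
    simp [hx]
  have hint : Integrable (fun x => Real.log ((π.rnDeriv π x).toReal)) π :=
    (integrable_const (0:ℝ)).congr h1.symm
  rw [klDiv, if_pos ⟨Measure.AbsolutelyContinuous.refl π, hint⟩, integral_congr_ae h1]
  simp

lemma klDiv_convex_aux {X : Type*} [MeasurableSpace X]
    (μ₀ π : Measure X) [IsProbabilityMeasure μ₀] [IsProbabilityMeasure π]
    (l : ℝ) (hl0 : 0 ≤ l) (hl1 : l ≤ 1) :
    klDiv π (ENNReal.ofReal (1 - l) • μ₀ + ENNReal.ofReal l • π) ≤
      ENNReal.ofReal (1 - l) * klDiv π μ₀ := by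
  rcases eq_or_lt_of_le hl1 with rfl | hl1
  · have hμ : ENNReal.ofReal (1 - 1) • μ₀ + ENNReal.ofReal 1 • π = π := by
      simp
    rw [hμ, klDiv_self_aux]
    exact zero_le
  have h1l : 0 < 1 - l := by linarith
  set a : ENNReal := ENNReal.ofReal (1 - l) with ha_def
  set b : ENNReal := ENNReal.ofReal l with hb_def
  set ν : Measure X := a • μ₀ + b • π with hν_def
  by_cases hcond : π ≪ μ₀ ∧ Integrable (fun x => Real.log ((π.rnDeriv μ₀ x).toReal)) π
  swap
  · have : klDiv π μ₀ = ⊤ := by rw [klDiv, if_neg hcond]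
    rw [this, ENNReal.mul_top (ENNReal.ofReal_pos.mpr h1l).ne']
    exact le_top
  obtain ⟨hac, hint⟩ := hcond
  have ha_ne_top : a ≠ ⊤ := ENNReal.ofReal_ne_top
  have hb_ne_top : b ≠ ⊤ := ENNReal.ofReal_ne_top
  haveI hfa : IsFiniteMeasure (a • μ₀) := by
    refine ⟨?_⟩
    rw [Measure.smul_apply, smul_eq_mul, measure_univ, mul_one]
    exact ha_ne_top.lt_top
  haveI hfb : IsFiniteMeasure (b • π) := by
    refine ⟨?_⟩
    rw [Measure.smul_apply, smul_eq_mul, measure_univ, mul_one]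
    exact hb_ne_top.lt_top
  haveI hfν : IsFiniteMeasure ν := by
    rw [hν_def]; infer_instance
  have ha_pos : a ≠ 0 := (ENNReal.ofReal_pos.mpr h1l).ne'
  -- π ≪ ν
  have hπν : π ≪ ν := by
    intro s hs
    have h0 : (a • μ₀) s = 0 :=
      le_antisymm (hs ▸ (Measure.le_add_right le_rfl) s) zero_le
    rw [Measure.smul_apply, smul_eq_mul, mul_eq_zero] at h0
    exact hac (h0.resolve_left ha_pos)
  have hνμ₀ : ν ≪ μ₀ := by
    intro s hs
    simp [hν_def, Measure.add_apply, Measure.smul_apply, hs, hac hs]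
  -- rnDeriv computations, a.e. μ₀
  have hadd : ν.rnDeriv μ₀ =ᵐ[μ₀] fun x => a + b * π.rnDeriv μ₀ x := by
    filter_upwards [Measure.rnDeriv_add (a • μ₀) (b • π) μ₀,
      Measure.rnDeriv_smul_left_of_ne_top μ₀ μ₀ ha_ne_top,
      Measure.rnDeriv_smul_left_of_ne_top π μ₀ hb_ne_top,
      Measure.rnDeriv_self μ₀] with x h1 h2 h3 h4
    rw [hν_def]
    simp only [h1, Pi.add_apply, h2, h3, Pi.smul_apply, smul_eq_mul, h4, mul_one]
  have hchain : π.rnDeriv ν * ν.rnDeriv μ₀ =ᵐ[μ₀] π.rnDeriv μ₀ :=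
    Measure.rnDeriv_mul_rnDeriv hπν
  have hkey : ∀ᵐ x ∂π, (π.rnDeriv ν x) * (a + b * π.rnDeriv μ₀ x) = π.rnDeriv μ₀ x := by
    apply hac.ae_le
    filter_upwards [hadd, hchain] with x h1 h2
    rw [← h1, ← h2]; rfl
  have hf_lt_top : ∀ᵐ x ∂π, π.rnDeriv μ₀ x < ⊤ :=
    hac.ae_le (Measure.rnDeriv_lt_top π μ₀)
  have hg_lt_top : ∀ᵐ x ∂π, π.rnDeriv ν x < ⊤ :=
    hπν.ae_le (Measure.rnDeriv_lt_top π ν)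
  have hf_pos : ∀ᵐ x ∂π, 0 < π.rnDeriv μ₀ x := Measure.rnDeriv_pos hac
  -- real-valued identity
  have hreal : ∀ᵐ x ∂π,
      (π.rnDeriv ν x).toReal * ((1 - l) + l * (π.rnDeriv μ₀ x).toReal)
        = (π.rnDeriv μ₀ x).toReal
      ∧ 0 < (π.rnDeriv μ₀ x).toReal := by
    filter_upwards [hkey, hf_lt_top, hg_lt_top, hf_pos] with x h1 h2 h3 h4
    constructor
    · have := congrArg ENNReal.toReal h1
      rwa [ENNReal.toReal_mul, ENNReal.toReal_add ha_ne_top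
          (ENNReal.mul_ne_top hb_ne_top h2.ne), ENNReal.toReal_mul,
        ENNReal.toReal_ofReal h1l.le, ENNReal.toReal_ofReal hl0] at this
    · exact ENNReal.toReal_pos h4.ne' h2.ne
  -- the pointwise log bounds
  have hlog : ∀ᵐ x ∂π,
      Real.log ((π.rnDeriv ν x).toReal) ≤ (1 - l) * Real.log ((π.rnDeriv μ₀ x).toReal)
      ∧ |Real.log ((π.rnDeriv ν x).toReal)|
          ≤ Real.log 2 + 2 * |Real.log ((π.rnDeriv μ₀ x).toReal)| := by
    filter_upwards [hreal] with x hx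
    obtain ⟨heq, hfpos⟩ := hx
    set f := (π.rnDeriv μ₀ x).toReal
    set g := (π.rnDeriv ν x).toReal
    have hden_pos : 0 < (1 - l) + l * f := by positivity
    have hg_eq : g = f / ((1 - l) + l * f) := by
      field_simp at heq ⊢
      linarith [heq]
    have hgpos : 0 < g := by rw [hg_eq]; positivity
    have hlog_g : Real.log g = Real.log f - Real.log ((1 - l) + l * f) := by
      rw [hg_eq, Real.log_div hfpos.ne' hden_pos.ne']
    -- concavity of log: l * log f ≤ log ((1-l) + l * f)
    have hconc : l * Real.log f ≤ Real.log ((1 - l) + l * f) := by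
      have := strictConcaveOn_log_Ioi.concaveOn.2 (Set.mem_Ioi.mpr one_pos)
        (Set.mem_Ioi.mpr hfpos) h1l.le hl0 (by ring)
      simpa [smul_eq_mul, Real.log_one] using this
    -- upper bound on log of the denominator
    have hub : Real.log ((1 - l) + l * f) ≤ Real.log 2 + |Real.log f| := by
      rcases le_or_gt f 1 with hf1 | hf1
      · have h2' : (1 - l) + l * f ≤ 2 := by nlinarith
        calc Real.log ((1 - l) + l * f) ≤ Real.log 2 := Real.log_le_log hden_pos h2'
          _ ≤ Real.log 2 + |Real.log f| := le_add_of_nonneg_right (abs_nonneg _)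
      · have h2' : (1 - l) + l * f ≤ 2 * f := by nlinarith
        calc Real.log ((1 - l) + l * f) ≤ Real.log (2 * f) := Real.log_le_log hden_pos h2'
          _ = Real.log 2 + Real.log f := Real.log_mul two_ne_zero hfpos.ne'
          _ ≤ Real.log 2 + |Real.log f| := by
              exact add_le_add le_rfl (le_abs_self _)
    have hlb : 0 ≤ Real.log ((1 - l) + l * f) ∨ True := Or.inr trivial
    constructor
    · rw [hlog_g]
      nlinarith [hconc]
    · rw [abs_le]
      constructor
      · rw [hlog_g]
        have : Real.log f ≥ -|Real.log f| := neg_abs_le _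
        have hlog2 : (0:ℝ) ≤ Real.log 2 := Real.log_nonneg one_le_two
        nlinarith [hub, neg_abs_le (Real.log f)]
      · rw [hlog_g]
        have h1 : Real.log f - Real.log ((1 - l) + l * f) ≤ (1 - l) * Real.log f := by
          nlinarith [hconc]
        have h2 : (1 - l) * Real.log f ≤ |Real.log f| := by
          rcases le_or_gt 0 (Real.log f) with h | h
          · nlinarith [abs_of_nonneg h]
          · nlinarith [abs_of_neg h]
        have hlog2 : (0:ℝ) ≤ Real.log 2 := Real.log_nonneg one_le_two
        nlinarith [abs_nonneg (Real.log f)]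
  -- integrability of log of the new density
  have hmeas : AEStronglyMeasurable (fun x => Real.log ((π.rnDeriv ν x).toReal)) π :=
    (Real.measurable_log.comp (Measure.measurable_rnDeriv π ν).ennreal_toReal).aestronglyMeasurable
  have hint_dom : Integrable (fun x => Real.log 2 + 2 * |Real.log ((π.rnDeriv μ₀ x).toReal)|) π :=
    (integrable_const _).add (hint.abs.const_mul 2)
  have hint_g : Integrable (fun x => Real.log ((π.rnDeriv ν x).toReal)) π := by
    refine hint_dom.mono' hmeas ?_
    filter_upwards [hlog] with x hx
    simpa using hx.2
  -- integral inequality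
  have hmono : ∫ x, Real.log ((π.rnDeriv ν x).toReal) ∂π
      ≤ (1 - l) * ∫ x, Real.log ((π.rnDeriv μ₀ x).toReal) ∂π := by
    rw [← integral_const_mul]
    refine integral_mono_ae hint_g (hint.const_mul (1 - l)) ?_
    filter_upwards [hlog] with x hx
    exact hx.1
  -- conclude
  rw [klDiv, if_pos ⟨hπν, hint_g⟩, klDiv, if_pos ⟨hac, hint⟩]
  calc ENNReal.ofReal (∫ x, Real.log ((π.rnDeriv ν x).toReal) ∂π)
      ≤ ENNReal.ofReal ((1 - l) * ∫ x, Real.log ((π.rnDeriv μ₀ x).toReal) ∂π) :=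
        ENNReal.ofReal_le_ofReal hmono
    _ = ENNReal.ofReal (1 - l) * ENNReal.ofReal (∫ x, Real.log ((π.rnDeriv μ₀ x).toReal) ∂π) :=
        ENNReal.ofReal_mul h1l.le

/-- Convexity bound for the inclusive KL. -/
theorem inclusive_KL_convexity_bound {X : Type*} [MeasurableSpace X]
    (μ₀ π : Measure X) [IsProbabilityMeasure μ₀] [IsProbabilityMeasure π] :
    (∀ l : ℝ, 0 ≤ l → l ≤ 1 →
      klDiv π (ENNReal.ofReal (1 - l) • μ₀ + ENNReal.ofReal l • π) ≤
        ENNReal.ofReal (1 - l) * klDiv π μ₀) ∧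
    (∀ t : ℝ, 0 ≤ t →
      klDiv π (ENNReal.ofReal (Real.exp (-t)) • μ₀
          + ENNReal.ofReal (1 - Real.exp (-t)) • π) ≤
        ENNReal.ofReal (Real.exp (-t)) * klDiv π μ₀) := by
  constructor
  · exact fun l hl0 hl1 => klDiv_convex_aux μ₀ π l hl0 hl1
  · intro t ht
    have h1 : Real.exp (-t) ≤ 1 := Real.exp_le_one_iff.mpr (by linarith)
    have h2 : 0 < Real.exp (-t) := Real.exp_pos _
    have := klDiv_convex_aux μ₀ π (1 - Real.exp (-t)) (by linarith) (by linarith)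
    simpa [sub_sub_cancel] using this
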